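/- Let K = ℚ(√14) with ring of integers O_K = ℤ[√14], and let 𝔭 = (2, √14) be the prime ideal of O_K above 2 (of norm 2). If, for a real number c > 0, the weighted norm f_{𝔭,c} is a Euclidean function on O_K, then √5 < c < √7. In other words, the Euclidean window satisfies w(𝔭) ⊆ (√5, √7). -/

import Mathlib

open scoped Classical

open NumberField IsDedekindDomain

/-- The exponent `v_𝔭(α)` of the prime `v` in the factorization of the fractional
ideal `α·𝓞 K`, for `α ≠ 0`; by convention `adicVal v 0 = 0`. -/
noncomputable def adicVal {K : Type*} [Field K] [NumberField K]
    (v : HeightOneSpectrum (𝓞 K)) (α : K) : ℤ :=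
  if h : α = 0 then 0
  else -Multiplicative.toAdd (WithZero.unzero ((Valuation.ne_zero_iff (v.valuation K)).mpr h))

/-- The weighted norm `f_{𝔭,c}(α) = |N(α)| · (c/N𝔭)^{v_𝔭(α)}`, with `f_{𝔭,c}(0) = 0`. -/
noncomputable def weightedNorm {K : Type*} [Field K] [NumberField K]
    (v : HeightOneSpectrum (𝓞 K)) (c : ℝ) (α : K) : ℝ :=
  if α = 0 then 0
  else |(Algebra.norm ℚ α : ℚ)| * (c / (Ideal.absNorm v.asIdeal : ℝ)) ^ (adicVal v α)

/-- `f` is a Euclidean function on `𝓞 K`. -/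
def IsEuclideanFunction {K : Type*} [Field K] [NumberField K] (f : K → ℝ) : Prop :=
  ∀ a b : 𝓞 K, b ≠ 0 → ∃ q : 𝓞 K, f ((a : K) - b * q) < f (b : K)

namespace EWAux

lemma sq8_odd {x : ℤ} (h : x % 2 = 1) : x^2 % 8 = 1 := by
  have h2 : x^2 % 8 = (x%8)^2 % 8 := by conv_lhs => rw [pow_two, Int.mul_emod, ← pow_two]
  have h3 : x % 8 = 1 ∨ x % 8 = 3 ∨ x % 8 = 5 ∨ x % 8 = 7 := by omega
  rcases h3 with h3|h3|h3|h3 <;> rw [h3] at h2 <;> norm_num at h2 <;> omega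

lemma sq8_even {x : ℤ} (h : x % 2 = 0) : x^2 % 8 = 0 ∨ x^2 % 8 = 4 := by
  have h2 : x^2 % 8 = (x%8)^2 % 8 := by conv_lhs => rw [pow_two, Int.mul_emod, ← pow_two]
  have h3 : x % 8 = 0 ∨ x % 8 = 2 ∨ x % 8 = 4 ∨ x % 8 = 6 := by omega
  rcases h3 with h3|h3|h3|h3 <;> rw [h3] at h2 <;> norm_num at h2 <;> omega

lemma sq7 (x : ℤ) : x^2 % 7 = 0 ∨ x^2 % 7 = 1 ∨ x^2 % 7 = 2 ∨ x^2 % 7 = 4 := by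
  have h2 : x^2 % 7 = (x%7)^2 % 7 := by conv_lhs => rw [pow_two, Int.mul_emod, ← pow_two]
  have h3 : x % 7 = 0 ∨ x % 7 = 1 ∨ x % 7 = 2 ∨ x % 7 = 3 ∨ x % 7 = 4 ∨ x % 7 = 5 ∨ x % 7 = 6 := by
    omega
  rcases h3 with h3|h3|h3|h3|h3|h3|h3 <;> rw [h3] at h2 <;> norm_num at h2 <;> omega

lemma sq7_two {x : ℤ} (h : x % 7 = 2) : x^2 % 7 = 4 := by
  have h2 : x^2 % 7 = (x%7)^2 % 7 := by conv_lhs => rw [pow_two, Int.mul_emod, ← pow_two]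
  rw [h] at h2; norm_num at h2; omega

lemma not_sq14 (n : ℤ) : n^2 ≠ 14 := by
  intro h
  rcases Int.even_or_odd n with he|ho
  · have := sq8_even (Int.even_iff.mp he); omega
  · have := sq8_odd (Int.odd_iff.mp ho); omega

lemma L1 {x y : ℤ} (hx : x % 2 = 1) (hy : y % 2 = 1) : (5:ℤ) ≤ |x^2 - 14*y^2| := by
  by_contra h
  push_neg at h
  rw [abs_lt] at h
  have hx8 := sq8_odd hx
  have hy8 := sq8_odd hy
  have hx7 := sq7 x
  omega

lemma L2 {x y : ℤ} (hx : x % 2 = 1) (h7 : x % 7 = 2) : (7:ℤ) ≤ |x^2 - 14*y^2| := by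
  by_contra h
  push_neg at h
  rw [abs_lt] at h
  have hx8 := sq8_odd hx
  have hx7 := sq7_two h7
  have hy8 : y^2 % 8 = 0 ∨ y^2 % 8 = 1 ∨ y^2 % 8 = 4 := by
    rcases Int.even_or_odd y with he|ho
    · exact (sq8_even (Int.even_iff.mp he)).imp id Or.inr
    · exact Or.inr (Or.inl (sq8_odd (Int.odd_iff.mp ho)))
  omega

lemma L3 {x y : ℤ} (hx : x % 2 = 0) (hy : y % 2 = 1) (h7 : x % 7 = 2) :
    (10:ℤ) ≤ |x^2 - 14*y^2| := by
  by_contra h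
  push_neg at h
  rw [abs_lt] at h
  have hx8 := sq8_even hx
  have hy8 := sq8_odd hy
  have hx7 := sq7_two h7
  omega

end EWAux

set_option maxHeartbeats 4000000 in
/-- For `K = ℚ(√14)` and `𝔭 = (2, √14)`:  if `f_{𝔭,c}` is a Euclidean function on `𝓞 K`,
then `√5 < c < √7`; i.e. the Euclidean window satisfies `w(𝔭) ⊆ (√5, √7)`. -/
theorem euclidean_window_sqrt14 {K : Type*} [Field K] [NumberField K]
    (sqrt14 : K) (hs : sqrt14 ^ 2 = 14) (hdeg : Module.finrank ℚ K = 2)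
    (ω : 𝓞 K) (hω : (ω : K) = sqrt14)
    (hP : (Ideal.span {2, ω} : Ideal (𝓞 K)).IsPrime)
    (h0 : (Ideal.span {2, ω} : Ideal (𝓞 K)) ≠ ⊥)
    (c : ℝ) (hc : 0 < c)
    (hE : IsEuclideanFunction (weightedNorm ⟨Ideal.span {2, ω}, hP, h0⟩ c)) :
    Real.sqrt 5 < c ∧ c < Real.sqrt 7 := by
  classical
  set P : Ideal (𝓞 K) := Ideal.span {2, ω} with hPdef
  set v : HeightOneSpectrum (𝓞 K) := ⟨P, hP, h0⟩ with hvdef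
  set mk : ℚ → ℚ → K := fun x y => algebraMap ℚ K x + algebraMap ℚ K y * sqrt14 with hmkdef
  have hs14 : sqrt14 * sqrt14 = (14 : K) := by rw [← pow_two, hs]
  have hint : IsIntegral ℤ sqrt14 := by rw [← hω]; exact ω.isIntegral_coe
  have hω' : algebraMap (𝓞 K) K ω = sqrt14 := hω
  have hcoeZ : ∀ m : ℤ, (((m : ℤ) : 𝓞 K) : K) = ((m : ℤ) : K) :=
    fun m => map_intCast (algebraMap (𝓞 K) K) m
  have hcoe1K : ((1 : 𝓞 K) : K) = 1 := map_one (algebraMap (𝓞 K) K)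
  have hcAdd : ∀ a b : 𝓞 K, ((a + b : 𝓞 K) : K) = (a : K) + (b : K) :=
    fun a b => map_add (algebraMap (𝓞 K) K) a b
  have hcSub : ∀ a b : 𝓞 K, ((a - b : 𝓞 K) : K) = (a : K) - (b : K) :=
    fun a b => map_sub (algebraMap (𝓞 K) K) a b
  have hcMul : ∀ a b : 𝓞 K, ((a * b : 𝓞 K) : K) = (a : K) * (b : K) :=
    fun a b => map_mul (algebraMap (𝓞 K) K) a b
  have hcoe2K : ((2 : 𝓞 K) : K) = 2 := map_ofNat (algebraMap (𝓞 K) K) 2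
  have hcoe7K : ((7 : 𝓞 K) : K) = 7 := map_ofNat (algebraMap (𝓞 K) K) 7
  have hcoe14K : ((14 : 𝓞 K) : K) = 14 := map_ofNat (algebraMap (𝓞 K) K) 14
  -- sqrt14 is not rational
  have hirr : ∀ q : ℚ, algebraMap ℚ K q ≠ sqrt14 := by
    intro q hq
    have hqi : IsIntegral ℤ q := by
      have h1 : IsIntegral ℤ (algebraMap ℚ K q) := hq ▸ hint
      exact (isIntegral_algebraMap_iff (algebraMap ℚ K).injective).mp h1
    obtain ⟨n, hn⟩ := IsIntegrallyClosed.isIntegral_iff.mp hqi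
    have hq2 : q ^ 2 = 14 := by
      have h2 : algebraMap ℚ K (q ^ 2) = algebraMap ℚ K 14 := by
        rw [map_pow, hq, hs, map_ofNat]
      exact (algebraMap ℚ K).injective h2
    apply EWAux.not_sq14 n
    have h3 : ((n : ℚ)) ^ 2 = (14 : ℚ) := by
      rw [show ((n:ℚ)) = q by exact_mod_cast hn, hq2]
    exact_mod_cast h3
  -- {1, sqrt14} is linearly independent over ℚ
  have hli : LinearIndependent ℚ ![1, sqrt14] := by
    rw [LinearIndependent.pair_iff]
    intro a b hab
    rw [Algebra.smul_def, Algebra.smul_def, mul_one] at hab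
    by_cases hb : b = 0
    · subst hb
      simp only [map_zero, zero_mul, add_zero] at hab
      refine ⟨(algebraMap ℚ K).injective (by rw [hab, map_zero]), rfl⟩
    · exfalso
      apply hirr (-a/b)
      have hB : algebraMap ℚ K b ≠ 0 := fun h => hb ((algebraMap ℚ K).injective (by rw [h, map_zero]))
      rw [map_div₀, map_neg, div_eq_iff hB]
      linear_combination -hab
  have hcard : Fintype.card (Fin 2) = Module.finrank ℚ K := by simp [hdeg]
  set B : Module.Basis (Fin 2) ℚ K := basisOfLinearIndependentOfCardEqFinrank hli hcard with hBdef
  have hB : ⇑B = ![1, sqrt14] := coe_basisOfLinearIndependentOfCardEqFinrank hli hcard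
  have hB0 : B 0 = 1 := by rw [hB]; rfl
  have hB1 : B 1 = sqrt14 := by rw [hB]; rfl
  -- repr of mk x y
  have hrepr : ∀ x y : ℚ, ∀ i, B.repr (mk x y) i = ![x, y] i := by
    intro x y i
    have hxy : mk x y = x • B 0 + y • B 1 := by
      rw [hB0, hB1, Algebra.smul_def, Algebra.smul_def, mul_one]
    rw [hxy, map_add, map_smul, map_smul, B.repr_self, B.repr_self]
    fin_cases i <;> simp [Finsupp.single_apply]
  have huniq : ∀ x y x' y' : ℚ, mk x y = mk x' y' → x = x' ∧ y = y' := by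
    intro x y x' y' h
    constructor
    · have h0' := congrArg (fun z => B.repr z 0) h
      simp only [hrepr] at h0'
      simpa using h0'
    · have h1' := congrArg (fun z => B.repr z 1) h
      simp only [hrepr] at h1'
      simpa using h1'
  -- multiplication by sqrt14
  have hmuls : ∀ x y : ℚ, mk x y * sqrt14 = mk (14*y) x := by
    intro x y
    simp only [hmkdef]
    rw [map_mul, show (algebraMap ℚ K) 14 = (14:K) from map_ofNat _ 14]
    linear_combination (algebraMap ℚ K y) * hs14
  -- the multiplication matrix
  have hmat : ∀ x y : ℚ, Algebra.leftMulMatrix B (mk x y) = !![x, 14*y; y, x] := by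
    intro x y
    ext i j
    rw [Algebra.leftMulMatrix_eq_repr_mul]
    fin_cases i <;> fin_cases j <;>
      simp [hB0, hB1, hmuls, hrepr]
  have hN : ∀ x y : ℚ, Algebra.norm ℚ (mk x y) = x^2 - 14*y^2 := by
    intro x y
    rw [Algebra.norm_eq_matrix_det B, hmat, Matrix.det_fin_two_of]; ring
  have hT : ∀ x y : ℚ, Algebra.trace ℚ K (mk x y) = 2*x := by
    intro x y
    rw [Algebra.trace_eq_matrix_trace B, hmat, Matrix.trace_fin_two_of]; ring
  -- coercion of integer combinations
  have hcoeInt : ∀ m n : ℤ, (((m : 𝓞 K) + (n : 𝓞 K) * ω : 𝓞 K) : K) = mk (m:ℚ) (n:ℚ) := by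
    intro m n
    simp only [hmkdef]
    rw [show (algebraMap ℚ K) ((m:ℤ):ℚ) = ((m:ℤ):K) from map_intCast _ m,
        show (algebraMap ℚ K) ((n:ℤ):ℚ) = ((n:ℤ):K) from map_intCast _ n]
    push_cast
    simp only [hcoeZ, hω, hω']
  have hcoordOf : ∀ (e : 𝓞 K) (m n : ℤ), e = (m : 𝓞 K) + (n : 𝓞 K) * ω →
      (e : K) = mk (m:ℚ) (n:ℚ) := by
    intro e m n he; rw [he]; exact hcoeInt m n
  -- every algebraic integer has integer coordinates
  have hcoord : ∀ r : 𝓞 K, ∃ m n : ℤ, (r : K) = mk (m:ℚ) (n:ℚ) := by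
    intro r
    set x := B.repr ((r : K)) 0 with hxdef
    set y := B.repr ((r : K)) 1 with hydef
    have hxy : ((r : K)) = mk x y := by
      have h1 := B.sum_repr ((r : K))
      rw [Fin.sum_univ_two, hB0, hB1] at h1
      rw [← h1, Algebra.smul_def, Algebra.smul_def, mul_one, ← hxdef, ← hydef]
    have htr : IsIntegral ℤ (Algebra.trace ℚ K ((r:K))) :=
      Algebra.isIntegral_trace r.isIntegral_coe
    obtain ⟨u, hu⟩ := IsIntegrallyClosed.isIntegral_iff.mp htr
    have hu' : ((u:ℚ)) = 2*x := by
      have h2 : algebraMap ℤ ℚ u = 2*x := by rw [hu, hxy, hT]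
      exact_mod_cast h2
    have hmul : ((r * ω : 𝓞 K) : K) = mk (14*y) x := by
      have h3 : ((r * ω : 𝓞 K) : K) = ((r:K)) * sqrt14 := by
        push_cast
        simp only [hω, hω']
      rw [h3, hxy, hmuls]
    have htr2 : IsIntegral ℤ (Algebra.trace ℚ K (((r * ω : 𝓞 K) : K))) :=
      Algebra.isIntegral_trace (r * ω).isIntegral_coe
    obtain ⟨w, hw⟩ := IsIntegrallyClosed.isIntegral_iff.mp htr2
    have hw' : ((w:ℚ)) = 28*y := by
      have h4 : algebraMap ℤ ℚ w = 28*y := by rw [hw, hmul, hT]; ring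
      exact_mod_cast h4
    have hN' : ((Algebra.norm ℤ r : ℚ)) = x^2 - 14*y^2 := by
      rw [Algebra.coe_norm_int, hxy, hN]
    set N := Algebra.norm ℤ r with hNdef
    have key : ((w:ℚ))^2 = 14*((u:ℚ))^2 - 56*((N:ℚ)) := by rw [hu', hw', hN']; ring
    have keyZ : w^2 = 14*u^2 - 56*N := by exact_mod_cast key
    have h2w : (2:ℤ) ∣ w := by
      have he : Even (w^2) := ⟨7*u^2 - 28*N, by linarith⟩
      obtain ⟨t, ht⟩ := (Int.even_pow.mp he).1
      exact ⟨t, by omega⟩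
    have h7w : (7:ℤ) ∣ w := by
      have hp7 : Prime (7:ℤ) := by norm_num
      have hdvd : (7:ℤ) ∣ w^2 := ⟨2*u^2 - 8*N, by linarith⟩
      exact hp7.dvd_of_dvd_pow hdvd
    obtain ⟨ν, hν⟩ : (14:ℤ) ∣ w := by omega
    have h196 : 196*ν^2 = 14*u^2 - 56*N := by
      rw [hν] at keyZ
      linear_combination keyZ
    have hu2 : u^2 = 14*ν^2 + 4*N := by linarith
    have hue : Even u := by
      have he : Even (u^2) := ⟨7*ν^2 + 2*N, by linarith⟩
      exact (Int.even_pow.mp he).1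
    obtain ⟨μ, hμ⟩ := hue
    have h4μ : 4*μ^2 = 14*ν^2 + 4*N := by
      rw [hμ] at hu2
      linear_combination hu2
    have hνe : Even ν := by
      have he : Even (7*ν^2) := ⟨μ^2 - N, by linarith⟩
      rcases Int.even_mul.mp he with h|h
      · obtain ⟨t, ht⟩ := h; omega
      · exact (Int.even_pow.mp h).1
    obtain ⟨n', hn'⟩ := hνe
    refine ⟨μ, n', ?_⟩
    have hx' : x = (μ:ℚ) := by
      have h7' : ((u:ℚ)) = 2*(μ:ℚ) := by push_cast [hμ]; ring
      linarith [hu']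
    have hy' : y = (n':ℚ) := by
      have hwn' : ((w:ℚ)) = 28*(n':ℚ) := by push_cast [hν, hn']; ring
      linarith [hw']
    rw [hxy, hx', hy']
  -- membership in P
  have h2P : (2 : 𝓞 K) ∈ P := Ideal.subset_span (by simp)
  have hωP : ω ∈ P := Ideal.subset_span (by simp)
  have hmemP : ∀ m n : ℤ, ((m : 𝓞 K) + (n : 𝓞 K) * ω ∈ P ↔ m % 2 = 0) := by
    intro m n
    constructor
    · intro hmem
      by_contra hodd
      obtain ⟨k, hk⟩ : ∃ k, m = 2*k+1 := ⟨(m-1)/2, by omega⟩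
      have h1 : (1 : 𝓞 K) ∈ P := by
        have heq : (1 : 𝓞 K) = ((m : 𝓞 K) + (n : 𝓞 K) * ω) - (k : 𝓞 K)*2 - (n : 𝓞 K)*ω := by
          push_cast [hk]; ring
        rw [heq]
        exact Submodule.sub_mem _ (Submodule.sub_mem _ hmem (Ideal.mul_mem_left _ _ h2P))
          (Ideal.mul_mem_left _ _ hωP)
      exact hP.ne_top ((Ideal.eq_top_iff_one P).mpr h1)
    · intro hm
      obtain ⟨k, hk⟩ : ∃ k, m = 2*k := ⟨m/2, by omega⟩
      rw [hPdef]
      exact Ideal.mem_span_pair.mpr ⟨k, n, by push_cast [hk]; ring⟩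
  have hmemOf : ∀ (e : 𝓞 K) (m n : ℤ), (e : K) = mk (m:ℚ) (n:ℚ) → (e ∈ P ↔ m % 2 = 0) := by
    intro e m n he
    have he' : e = (m : 𝓞 K) + (n : 𝓞 K) * ω := by
      have h1 := hcoeInt m n
      exact_mod_cast he.trans h1.symm
    rw [he']; exact hmemP m n
  -- P^2 = (2)
  have hω2 : ω * ω = (14 : 𝓞 K) := by
    have h1 : ((ω * ω : 𝓞 K) : K) = ((14 : 𝓞 K) : K) := by
      rw [hcMul, hω, hs14, hcoe14K]
    exact_mod_cast h1
  have hP2 : P^2 = Ideal.span {(2 : 𝓞 K)} := by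
    apply le_antisymm
    · rw [pow_two, Ideal.mul_le]
      intro i hi j hj
      rw [hPdef, Ideal.mem_span_pair] at hi hj
      obtain ⟨a, b, hab⟩ := hi
      obtain ⟨a', b', hab'⟩ := hj
      rw [Ideal.mem_span_singleton]
      refine ⟨2*(a*a') + a*b'*ω + a'*b*ω + 7*(b*b'), ?_⟩
      rw [← hab, ← hab']
      linear_combination (b*b') * hω2
    · rw [Ideal.span_singleton_le_iff_mem]
      have h2eq : (2 : 𝓞 K) = ω*ω - 3*(2*2) := by rw [hω2]; norm_num
      rw [h2eq]
      apply Submodule.sub_mem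
      · rw [pow_two]; exact Ideal.mul_mem_mul hωP hωP
      · rw [pow_two]; exact Ideal.mul_mem_left _ _ (Ideal.mul_mem_mul h2P h2P)
  -- absolute norms
  have hb2 : (2 : 𝓞 K) ≠ 0 := two_ne_zero
  have h2coord : ((2:𝓞 K) : K) = mk ((2:ℤ):ℚ) ((0:ℤ):ℚ) :=
    hcoordOf _ 2 0 (by push_cast; ring)
  have hnorm2 : Algebra.norm ℤ (2 : 𝓞 K) = 4 := by
    have h1 : ((Algebra.norm ℤ (2 : 𝓞 K) : ℚ)) = 4 := by
      rw [Algebra.coe_norm_int, h2coord, hN]; norm_num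
    exact_mod_cast h1
  have habs2 : Ideal.absNorm (Ideal.span {(2 : 𝓞 K)}) = 4 := by
    rw [Ideal.absNorm_span_singleton, hnorm2]; rfl
  have habsP : Ideal.absNorm P = 2 := by
    have h4 : Ideal.absNorm P ^ 2 = 4 := by
      rw [← map_pow, hP2, habs2]
    have hle : Ideal.absNorm P ≤ 2 := by nlinarith
    have hge : 2 ≤ Ideal.absNorm P := by nlinarith
    omega
  -- the valuation of nonzero integers
  have hadic : ∀ r : 𝓞 K, r ≠ 0 →
      ∃ n : ℕ, adicVal v ((r : K)) = n ∧ r ∈ P^n ∧ r ∉ P^(n+1) := by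
    intro r hr
    have hα : ((r : K)) ≠ 0 := fun h => hr (by exact_mod_cast h)
    have hval : v.valuation K ((r : K)) = v.intValuation r := v.valuation_of_algebraMap r
    set u0 := WithZero.unzero ((Valuation.ne_zero_iff (v.valuation K)).mpr hα) with hu0
    have hcoe : ((u0 : WithZero (Multiplicative ℤ))) = v.valuation K ((r:K)) := WithZero.coe_unzero _
    have hIVD : v.intValuation r = ((u0 : WithZero (Multiplicative ℤ))) := by
      rw [← hval]; exact hcoe.symm
    have hadicval : adicVal v ((r:K)) = -Multiplicative.toAdd u0 := by
      simp only [adicVal, dif_neg hα]; rfl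
    have hle : Multiplicative.toAdd u0 ≤ 0 := by
      have h1 : v.valuation K ((r:K)) ≤ 1 := by
        rw [hval]; exact v.intValuation_le_one r
      rw [← hcoe] at h1
      have h2 : u0 ≤ 1 := by exact_mod_cast h1
      simpa [← Multiplicative.toAdd_le] using h2
    refine ⟨(-Multiplicative.toAdd u0).toNat, by rw [hadicval]; omega, ?_, ?_⟩
    · have hn : ((u0 : WithZero (Multiplicative ℤ)))
          = ((Multiplicative.ofAdd (-(((-Multiplicative.toAdd u0).toNat : ℤ))) : Multiplicative ℤ) : WithZero (Multiplicative ℤ)) := by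
        rw [Int.toNat_of_nonneg (by omega), neg_neg, ofAdd_toAdd]
      have hdvd : v.asIdeal ^ ((-Multiplicative.toAdd u0).toNat) ∣ Ideal.span {r} := by
        rw [← v.intValuation_le_pow_iff_dvd, hIVD, hn]; exact le_of_eq rfl
      exact (Ideal.span_singleton_le_iff_mem _).mp (Ideal.le_of_dvd hdvd)
    · intro hmem
      have hdvd : v.asIdeal ^ ((-Multiplicative.toAdd u0).toNat + 1) ∣ Ideal.span {r} :=
        Ideal.dvd_span_singleton.mpr hmem
      have hle2 := (v.intValuation_le_pow_iff_dvd r _).mpr hdvd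
      rw [hIVD] at hle2
      have h5 : u0 ≤ Multiplicative.ofAdd (-(((((-Multiplicative.toAdd u0).toNat + 1 : ℕ)) : ℤ))) := by
        exact WithZero.coe_le_coe.mp hle2
      rw [← ofAdd_toAdd u0, Multiplicative.ofAdd_le] at h5
      simp only [toAdd_ofAdd] at h5
      push_cast at h5
      omega
  have hadic_eq : ∀ r : 𝓞 K, r ≠ 0 → ∀ n : ℕ, r ∈ P^n → r ∉ P^(n+1) →
      adicVal v ((r : K)) = n := by
    intro r hr n h1 h2
    obtain ⟨k, hk, hk1, hk2⟩ := hadic r hr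
    rcases lt_trichotomy k n with h|h|h
    · exact absurd (Ideal.pow_le_pow_right (by omega : k+1 ≤ n) h1) hk2
    · rw [hk, h]
    · exact absurd (Ideal.pow_le_pow_right (by omega : n+1 ≤ k) hk1) h2
  -- computing the weighted norm
  have hwn : ∀ (α : K), α ≠ 0 → ∀ n : ℕ, adicVal v α = n →
      weightedNorm v c α = |(Algebra.norm ℚ α : ℚ)| * (c/2)^n := by
    intro α hα n hn
    simp only [weightedNorm, if_neg hα]
    rw [show ((Ideal.absNorm v.asIdeal : ℕ) : ℝ) = (2:ℝ) by
      rw [show v.asIdeal = P from rfl, habsP]; norm_num]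
    rw [hn, zpow_natCast]
  have hfval : ∀ (r : 𝓞 K) (m n : ℤ), (r : K) = mk (m:ℚ) (n:ℚ) → r ≠ 0 → ∀ k : ℕ,
      adicVal v ((r:K)) = k →
      weightedNorm v c ((r:K)) = ((|m^2 - 14*n^2| : ℤ) : ℝ) * (c/2)^k := by
    intro r m n hr hr0 k hk
    have hα : ((r:K)) ≠ 0 := fun h => hr0 (by exact_mod_cast h)
    rw [hwn _ hα k hk, hr, hN]
    congr 1
    push_cast
    ring
  -- the weighted norm of 2 is c^2
  have h2P2 : (2:𝓞 K) ∈ P^2 := by rw [hP2]; exact Ideal.mem_span_singleton_self _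
  have h2P3 : (2:𝓞 K) ∉ P^(2+1) := by
    intro hmem
    have hle : Ideal.span {(2:𝓞 K)} ≤ P^(2+1) := (Ideal.span_singleton_le_iff_mem _).mpr hmem
    have hdvd := Ideal.absNorm_dvd_absNorm_of_le hle
    rw [habs2, map_pow, habsP] at hdvd
    norm_num at hdvd
  have hval2 : adicVal v (((2:𝓞 K):K)) = 2 := hadic_eq _ hb2 2 h2P2 h2P3
  have hf2 : weightedNorm v c (((2:𝓞 K):K)) = c^2 := by
    rw [hfval 2 2 0 h2coord hb2 2 hval2]
    norm_num
    ring
  -- LOWER BOUND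
  obtain ⟨q, hq⟩ := hE (1 + ω) 2 hb2
  obtain ⟨m, n, hmn⟩ := hcoord q
  have hsq5 : Real.sqrt 5 < c := by
    set rr : 𝓞 K := (1 + ω) - 2*q with hrrdef
    have hrrK : (rr : K) = mk ((1 - 2*m : ℤ):ℚ) ((1 - 2*n : ℤ):ℚ) := by
      have h1 : (rr : K) = ((1 + ω : 𝓞 K) : K) - ((2:𝓞 K):K) * ((q : K)) := by
        rw [hrrdef, hcSub, hcMul]
      rw [h1, hcoe2K, hmn]
      simp only [hmkdef]
      rw [show (algebraMap ℚ K) ((m:ℤ):ℚ) = ((m:ℤ):K) from map_intCast _ m,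
          show (algebraMap ℚ K) ((n:ℤ):ℚ) = ((n:ℤ):K) from map_intCast _ n,
          show (algebraMap ℚ K) (((1 - 2*m : ℤ)):ℚ) = (((1 - 2*m : ℤ)):K) from map_intCast _ _,
          show (algebraMap ℚ K) (((1 - 2*n : ℤ)):ℚ) = (((1 - 2*n : ℤ)):K) from map_intCast _ _]
      rw [hcAdd, hcoe1K, hω]
      push_cast
      ring
    have hrr0 : rr ≠ 0 := by
      intro h
      have h1 : (rr : K) = mk ((0:ℤ):ℚ) ((0:ℤ):ℚ) := by
        rw [h]; simp [hmkdef]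
      have h2 := (huniq _ _ _ _ (hrrK.symm.trans h1)).1
      have h3 : (1 - 2*m : ℤ) = 0 := by exact_mod_cast h2
      omega
    have hnotP : rr ∉ P := by
      rw [hmemOf rr _ _ hrrK]
      omega
    have hval0 : adicVal v ((rr:K)) = 0 :=
      hadic_eq rr hrr0 0 (by simp) (by rw [zero_add, pow_one]; exact hnotP)
    have hlow : ((5:ℝ)) ≤ weightedNorm v c ((rr:K)) := by
      rw [hfval rr _ _ hrrK hrr0 0 hval0, pow_zero, mul_one]
      have := EWAux.L1 (x := 1 - 2*m) (y := 1 - 2*n) (by omega) (by omega)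
      exact_mod_cast this
    have harg : ((1 + ω : 𝓞 K) : K) - ((2:𝓞 K):K) * ((q:K)) = ((rr : K)) := by
      rw [hrrdef, hcSub, hcMul]
    rw [harg, hf2] at hq
    have : (5:ℝ) < c^2 := lt_of_le_of_lt hlow hq
    exact (Real.sqrt_lt' hc).mpr this
  refine ⟨hsq5, ?_⟩
  -- UPPER BOUND
  by_contra hcon
  push_neg at hcon
  have hc2 : (2:ℝ) ≤ c :=
    le_trans ((Real.le_sqrt (by norm_num) (by norm_num)).mpr (by norm_num)) hcon
  have hc7 : (7:ℝ) ≤ c^2 := by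
    have h := Real.sq_sqrt (by norm_num : (0:ℝ) ≤ 7)
    nlinarith [Real.sqrt_nonneg 7]
  set bb : 𝓞 K := 7 + 2*ω with hbbdef
  have hbbco : (bb : K) = mk ((7:ℤ):ℚ) ((2:ℤ):ℚ) := hcoordOf bb 7 2 (by push_cast; ring)
  have hbb0 : bb ≠ 0 := by
    intro h
    have h1 : (bb : K) = mk ((0:ℤ):ℚ) ((0:ℤ):ℚ) := by rw [h]; simp [hmkdef]
    have h2 := (huniq _ _ _ _ (hbbco.symm.trans h1)).1
    norm_num at h2
  have hbbP : bb ∉ P := by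
    rw [hmemOf bb _ _ hbbco]
    omega
  have hbbval : adicVal v ((bb:K)) = 0 :=
    hadic_eq bb hbb0 0 (by simp) (by rw [zero_add, pow_one]; exact hbbP)
  have hfbb : weightedNorm v c ((bb:K)) = 7 := by
    rw [hfval bb 7 2 hbbco hbb0 0 hbbval]
    norm_num
  obtain ⟨q2, hq2⟩ := hE 2 bb hbb0
  obtain ⟨m2, n2, hmn2⟩ := hcoord q2
  set X : ℤ := 2 - 7*m2 - 28*n2 with hXdef
  set Y : ℤ := -2*m2 - 7*n2 with hYdef
  set rr : 𝓞 K := 2 - bb*q2 with hrrdef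
  have hrrK : (rr : K) = mk ((X:ℤ):ℚ) ((Y:ℤ):ℚ) := by
    have h1 : (rr : K) = ((2:𝓞 K):K) - ((bb:K)) * ((q2 : K)) := by
      rw [hrrdef, hcSub, hcMul]
    rw [h1, hcoe2K, hbbco, hmn2]
    simp only [hmkdef, hXdef, hYdef]
    rw [show (algebraMap ℚ K) ((m2:ℤ):ℚ) = ((m2:ℤ):K) from map_intCast _ m2,
        show (algebraMap ℚ K) ((n2:ℤ):ℚ) = ((n2:ℤ):K) from map_intCast _ n2,
        show (algebraMap ℚ K) (((7:ℤ)):ℚ) = (((7:ℤ)):K) from map_intCast _ _,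
        show (algebraMap ℚ K) (((2:ℤ)):ℚ) = (((2:ℤ)):K) from map_intCast _ _,
        show (algebraMap ℚ K) (((2 - 7*m2 - 28*n2 : ℤ)):ℚ) = (((2 - 7*m2 - 28*n2 : ℤ)):K) from map_intCast _ _,
        show (algebraMap ℚ K) (((-2*m2 - 7*n2 : ℤ)):ℚ) = (((-2*m2 - 7*n2 : ℤ)):K) from map_intCast _ _]
    push_cast
    linear_combination (-2 * ((n2:ℤ):K)) * hs14
  have hX7 : X % 7 = 2 := by omega
  have hrr0 : rr ≠ 0 := by
    intro h
    have h1 : (rr : K) = mk ((0:ℤ):ℚ) ((0:ℤ):ℚ) := by rw [h]; simp [hmkdef]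
    have h2 := (huniq _ _ _ _ (hrrK.symm.trans h1)).1
    have h3 : X = 0 := by exact_mod_cast h2
    omega
  have hα : ((rr:K)) ≠ 0 := fun h => hrr0 (by exact_mod_cast h)
  have harg : ((2 : 𝓞 K) : K) - ((bb:K)) * ((q2:K)) = ((rr : K)) := by
    rw [hrrdef, hcSub, hcMul]
  rw [harg, hfbb] at hq2
  rcases Int.emod_two_eq X with hX2|hX2
  · -- X even
    rcases Int.emod_two_eq Y with hY2|hY2
    · -- X, Y both even : valuation at least 2
      obtain ⟨X2, hX2'⟩ : ∃ t, X = 2*t := ⟨X/2, by omega⟩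
      obtain ⟨Y2, hY2'⟩ : ∃ t, Y = 2*t := ⟨Y/2, by omega⟩
      have hrrP2 : rr ∈ P^2 := by
        rw [hP2, Ideal.mem_span_singleton]
        refine ⟨(X2 : 𝓞 K) + (Y2 : 𝓞 K)*ω, ?_⟩
        have h1 : ((2 * ((X2 : 𝓞 K) + (Y2 : 𝓞 K)*ω) : 𝓞 K) : K) = mk ((X:ℤ):ℚ) ((Y:ℤ):ℚ) :=
          hcoordOf _ X Y (by push_cast [hX2', hY2']; ring)
        exact_mod_cast hrrK.trans h1.symm
      obtain ⟨k, hk, hk1, hk2⟩ := hadic rr hrr0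
      have hk2' : 2 ≤ k := by
        by_contra hlt
        push_neg at hlt
        exact hk2 (Ideal.pow_le_pow_right (by omega) hrrP2)
      have hspan : Ideal.span {rr} ≤ P^k := (Ideal.span_singleton_le_iff_mem _).mpr hk1
      have hdvd : 2^k ∣ Ideal.absNorm (Ideal.span {rr}) := by
        have h3 := Ideal.absNorm_dvd_absNorm_of_le hspan
        rwa [map_pow, habsP] at h3
      have hpos : 0 < Ideal.absNorm (Ideal.span {rr}) := by
        rcases Nat.eq_zero_or_pos (Ideal.absNorm (Ideal.span {rr})) with h|h
        · exfalso
          rw [Ideal.absNorm_eq_zero_iff, Ideal.span_singleton_eq_bot] at h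
          exact hrr0 h
        · exact h
      have hge : 2^k ≤ Ideal.absNorm (Ideal.span {rr}) := Nat.le_of_dvd hpos hdvd
      have hnormeq : |(Algebra.norm ℚ ((rr:K)) : ℚ)| = ((Ideal.absNorm (Ideal.span {rr}) : ℕ) : ℚ) := by
        rw [Ideal.absNorm_span_singleton, ← Algebra.coe_norm_int, Nat.cast_natAbs]
        simp [Int.cast_abs]
      have hflow : (7:ℝ) ≤ weightedNorm v c ((rr:K)) := by
        rw [hwn _ hα k hk]
        have e1 : ((2:ℝ))^k * (c/2)^k = c^k := by
          rw [← mul_pow, show (2:ℝ)*(c/2) = c by ring]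
        have e2 : (c:ℝ)^2 ≤ c^k := pow_le_pow_right₀ (by linarith) hk2'
        have e3' : ((|(Algebra.norm ℚ ((rr:K)) : ℚ)| : ℚ) : ℝ)
            = ((Ideal.absNorm (Ideal.span {rr}) : ℕ) : ℝ) := by
          exact_mod_cast hnormeq
        have e3 : ((2:ℝ))^k ≤ ((|(Algebra.norm ℚ ((rr:K)) : ℚ)| : ℚ) : ℝ) := by
          rw [e3']
          exact_mod_cast hge
        have e4 : (0:ℝ) ≤ (c/2)^k := by positivity
        calc (7:ℝ) ≤ c^2 := hc7
          _ ≤ c^k := e2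
          _ = 2^k * (c/2)^k := e1.symm
          _ ≤ ((|(Algebra.norm ℚ ((rr:K)) : ℚ)| : ℚ) : ℝ) * (c/2)^k :=
              mul_le_mul_of_nonneg_right e3 e4
      linarith
    · -- X even, Y odd : valuation 1
      have hmem1 : rr ∈ P := by
        rw [hmemOf rr _ _ hrrK]
        omega
      have hnot2 : rr ∉ P^(1+1) := by
        intro hmem
        rw [show ((1:ℕ)+1) = 2 from rfl, hP2, Ideal.mem_span_singleton] at hmem
        obtain ⟨t, ht⟩ := hmem
        obtain ⟨mt, nt, hmnt⟩ := hcoord t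
        have h1 : (rr : K) = mk ((2*mt : ℤ):ℚ) ((2*nt : ℤ):ℚ) := by
          rw [ht]
          have h3 : t = ((mt : ℤ) : 𝓞 K) + ((nt : ℤ) : 𝓞 K) * ω := by
            have h4 := hcoeInt mt nt
            exact_mod_cast hmnt.trans h4.symm
          exact hcoordOf _ _ _ (by rw [h3]; push_cast; ring)
        have h5 := (huniq _ _ _ _ (hrrK.symm.trans h1)).2
        have h6 : Y = 2*nt := by exact_mod_cast h5
        omega
      have hval1 : adicVal v ((rr:K)) = 1 :=
        hadic_eq rr hrr0 1 (by rw [pow_one]; exact hmem1) hnot2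
      have hlow : (10:ℝ) * (c/2) ≤ weightedNorm v c ((rr:K)) := by
        rw [hfval rr _ _ hrrK hrr0 1 hval1, pow_one]
        have h7 := EWAux.L3 (x := X) (y := Y) hX2 hY2 hX7
        have h8 : ((10:ℝ)) ≤ (((|X^2 - 14*Y^2| : ℤ)):ℝ) := by exact_mod_cast h7
        have h9 : (0:ℝ) ≤ c/2 := by linarith
        exact mul_le_mul_of_nonneg_right h8 h9
      have h10 : (10:ℝ) ≤ 10 * (c/2) := by linarith
      linarith
  · -- X odd : valuation 0
    have hnotP : rr ∉ P := by
      rw [hmemOf rr _ _ hrrK]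
      omega
    have hval0 : adicVal v ((rr:K)) = 0 :=
      hadic_eq rr hrr0 0 (by simp) (by rw [zero_add, pow_one]; exact hnotP)
    have hlow : ((7:ℝ)) ≤ weightedNorm v c ((rr:K)) := by
      rw [hfval rr _ _ hrrK hrr0 0 hval0, pow_zero, mul_one]
      have := EWAux.L2 (x := X) (y := Y) hX2 hX7
      exact_mod_cast this
    linarith
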